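/- Every symmetric biderivation of W(0,1) is of the form Υ^0_Ω for some finitely supported family Ω = (μ_k)_{k∈ℤ} of complex numbers; i.e., f(L_m, L_n) = Σ_k (m+n+k)·μ_k·I_{m+n+k}, f(L_m, I_n) = f(I_n, L_m) = f(I_m, I_n) = 0 for all m,n ∈ ℤ. -/

import Mathlib

/-- `f` is a biderivation: a derivation in each argument. -/
def IsBiderivation {W : Type*} [LieRing W] (f : W → W → W) : Prop :=
  (∀ x y z : W, f ⁅x, y⁆ z = ⁅x, f y z⁆ + ⁅f x z, y⁆) ∧
  (∀ x y z : W, f x ⁅y, z⁆ = ⁅f x y, z⁆ + ⁅y, f x z⁆)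

/-- A model of the Lie algebra `W(a,b)`: a complex Lie algebra with a basis
`{L m, I m | m : ℤ}` satisfying the defining bracket relations. -/
structure IsWab (a b : ℂ) (W : Type*) [LieRing W] [LieAlgebra ℂ W]
    (L I : ℤ → W) : Prop where
  bracket_LL : ∀ m n : ℤ, ⁅L m, L n⁆ = ((m - n : ℤ) : ℂ) • L (m + n)
  bracket_LI : ∀ m n : ℤ, ⁅L m, I n⁆ = (-((n : ℂ) + a + b * (m : ℂ))) • I (m + n)
  bracket_II : ∀ m n : ℤ, ⁅I m, I n⁆ = 0
  basis : ∃ B : Module.Basis (ℤ ⊕ ℤ) ℂ W,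
    (∀ m : ℤ, B (Sum.inl m) = L m) ∧ (∀ m : ℤ, B (Sum.inr m) = I m)


lemma intcast_ne (x y : ℤ) (h : x ≠ y) : ((x : ℂ) - y) ≠ 0 := by
  rw [sub_ne_zero]; exact_mod_cast h

/-- Solver for the `L`-coefficients of `f(L,I)` (and of `f(I,I)` after a swap). -/
lemma wSolveB (Bb : ℤ → ℤ → ℤ → ℂ)
    (hS3 : ∀ p m n k : ℤ, (-((p + m : ℤ) : ℂ)) * Bb n (p + m) k
      = ((2 * p - k : ℤ) : ℂ) * Bb n m (k - p)) :
    ∀ n m k : ℤ, Bb n m k = 0 := by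
  have hoff : ∀ n m k : ℤ, k ≠ m → Bb n m k = 0 := by
    intro n m k hk
    have h := hS3 0 m n k
    simp only [zero_add, sub_zero] at h
    push_cast at h
    have h2 : ((k : ℂ) - m) * Bb n m k = 0 := by linear_combination h
    exact (mul_eq_zero.mp h2).resolve_left (intcast_ne k m hk)
  have hstep : ∀ p m n : ℤ, (-((p + m : ℤ) : ℂ)) * Bb n (p + m) (p + m)
      = ((p - m : ℤ) : ℂ) * Bb n m m := by
    intro p m n
    have h := hS3 p m n (p + m)
    have h1 : (p + m - p : ℤ) = m := by omega
    rw [h1] at h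
    push_cast at h ⊢
    linear_combination h
  have hdiag0 : ∀ n q : ℤ, q ≠ 0 → Bb n q q = 0 := by
    intro n q hq
    have h := hstep (-q) q n
    rw [show (-q + q : ℤ) = 0 by omega] at h
    push_cast at h
    have h2 : ((-q : ℂ) - q) * Bb n q q = 0 := by linear_combination -h
    exact (mul_eq_zero.mp h2).resolve_left (by
      have : (-q : ℤ) ≠ q := by omega
      exact_mod_cast intcast_ne (-q) q this)
  have hdiagz : ∀ n : ℤ, Bb n 0 0 = 0 := by
    intro n
    have h := hstep 1 0 n
    rw [show (1 + 0 : ℤ) = 1 by omega] at h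
    rw [hdiag0 n 1 one_ne_zero] at h
    push_cast at h
    have h2 : (1 : ℂ) * Bb n 0 0 = 0 := by linear_combination -h
    simpa using h2
  intro n m k
  by_cases hk : k = m
  · subst hk
    by_cases hk0 : k = 0
    · subst hk0; exact hdiagz n
    · exact hdiag0 n k hk0
  · exact hoff n m k hk

/-- Solver for the `I`-coefficients of `f(L,I)`. -/
lemma wSolvebb (bb : ℤ → ℤ → ℤ → ℂ)
    (hS4 : ∀ p m n k : ℤ, (-((p + m : ℤ) : ℂ)) * bb n (p + m) k
      = -(k : ℂ) * bb n m (k - p))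
    (hS5 : ∀ p n m k : ℤ, ((p - n : ℤ) : ℂ) * bb (p + n) m k
      = -(k : ℂ) * bb n m (k - p) + (k : ℂ) * bb p m (k - n)) :
    ∀ n m k : ℤ, bb n m k = 0 := by
  have hoff : ∀ n m k : ℤ, k ≠ m → bb n m k = 0 := by
    intro n m k hk
    have h := hS4 0 m n k
    simp only [zero_add, sub_zero] at h
    push_cast at h
    have h2 : ((k : ℂ) - m) * bb n m k = 0 := by linear_combination h
    exact (mul_eq_zero.mp h2).resolve_left (intcast_ne k m hk)
  have hdiag : ∀ n m : ℤ, bb n m m = 0 := by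
    intro n m
    obtain ⟨p, q, hp, hq, hpq, hsum⟩ : ∃ p q : ℤ, p ≠ 0 ∧ q ≠ 0 ∧ p ≠ q ∧ p + q = n := by
      by_cases h : n = 1 ∨ n = 2
      · exact ⟨n + 1, -1, by omega, by omega, by omega, by omega⟩
      · exact ⟨n - 1, 1, by omega, by omega, by omega, by omega⟩
    have h := hS5 p q m m
    rw [hoff q m (m - p) (by omega), hoff p m (m - q) (by omega), hsum] at h
    push_cast at h
    have h2 : ((p : ℂ) - q) * bb n m m = 0 := by linear_combination h
    exact (mul_eq_zero.mp h2).resolve_left (intcast_ne p q hpq)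
  intro n m k
  by_cases hk : k = m
  · subst hk; exact hdiag n k
  · exact hoff n m k hk

/-- Solver for the `I`-coefficients of `f(I,I)`. -/
lemma wSolvecc (cc : ℤ → ℤ → ℤ → ℂ)
    (hsym : ∀ m n k : ℤ, cc m n k = cc n m k)
    (hS7 : ∀ p n m k : ℤ, (-((p + n : ℤ) : ℂ)) * cc (p + n) m k
      = -(k : ℂ) * cc n m (k - p)) :
    ∀ m n k : ℤ, cc m n k = 0 := by
  have hoff : ∀ n m k : ℤ, k ≠ n → cc n m k = 0 := by
    intro n m k hk
    have h := hS7 0 n m k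
    simp only [zero_add, sub_zero] at h
    push_cast at h
    have h2 : ((k : ℂ) - n) * cc n m k = 0 := by linear_combination h
    exact (mul_eq_zero.mp h2).resolve_left (intcast_ne k n hk)
  have hdiag : ∀ n : ℤ, n ≠ 0 → cc n n n = 0 := by
    intro n hn
    have h := hS7 1 (n - 1) n n
    rw [show (1 + (n - 1) : ℤ) = n by omega] at h
    rw [hsym (n - 1) n (n - 1), hoff n (n - 1) (n - 1) (by omega)] at h
    push_cast at h
    have h2 : (n : ℂ) * cc n n n = 0 := by linear_combination -h
    exact (mul_eq_zero.mp h2).resolve_left (by exact_mod_cast hn)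
  have hzero : cc 0 0 0 = 0 := by
    have h := hS7 1 0 0 1
    rw [show (1 + 0 : ℤ) = 1 by omega, show (1 - 1 : ℤ) = 0 by omega] at h
    rw [hsym 1 0 1, hoff 0 1 1 one_ne_zero] at h
    push_cast at h
    have h2 : (1 : ℂ) * cc 0 0 0 = 0 := by linear_combination h
    simpa using h2
  intro m n k
  by_cases hkm : k = m
  · by_cases hkn : k = n
    · subst hkm; subst hkn
      by_cases hk0 : k = 0
      · subst hk0; exact hzero
      · exact hdiag k hk0
    · rw [hsym]; exact hoff n m k hkn
  · exact hoff m n k hkm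

/-- Solver for the `L`-coefficients of `f(L,L)`. -/
lemma wSolveA (A : ℤ → ℤ → ℤ → ℂ)
    (hsym : ∀ m n k : ℤ, A m n k = A n m k)
    (hS1 : ∀ p m n k : ℤ, ((p - m : ℤ) : ℂ) * A (p + m) n k
      = ((2 * p - k : ℤ) : ℂ) * A m n (k - p) - ((2 * m - k : ℤ) : ℂ) * A p n (k - m)) :
    ∀ m n k : ℤ, A m n k = 0 := by
  have h1 : ∀ m n k : ℤ, ((k : ℂ) - m) * A m n k = ((k : ℂ) - 2 * m) * A 0 n (k - m) := by
    intro m n k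
    have h := hS1 0 m n k
    simp only [zero_add, sub_zero] at h
    push_cast at h
    linear_combination h
  have ht : ∀ j : ℤ, j ≠ 0 → A 0 0 j = 0 := by
    intro j hj
    obtain ⟨m, n, hm, hn, hmn, hsum⟩ : ∃ m n : ℤ, m ≠ 0 ∧ n ≠ 0 ∧ m ≠ n ∧ m + n = -j := by
      by_cases h : j = 1 ∨ j = 2
      · exact ⟨-j - 1, 1, by omega, by omega, by omega, by omega⟩
      · exact ⟨-j + 1, -1, by omega, by omega, by omega, by omega⟩
    have e1 := h1 m n 0
    rw [hsym 0 n (0 - m)] at e1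
    have e2 := h1 n m 0
    rw [hsym n m 0, hsym 0 m (0 - n)] at e2
    have e3 := h1 n 0 (-m)
    rw [show (-m - n : ℤ) = j by omega] at e3
    have e4 := h1 m 0 (-n)
    rw [show (-n - m : ℤ) = j by omega] at e4
    simp only [zero_sub] at e1 e2
    push_cast at e1 e2 e3 e4
    -- e1 : (0 - m) * A m n 0 = (0 - 2m) * A n 0 (-m)
    -- e2 : (0 - n) * A m n 0 = (0 - 2n) * A m 0 (-n)
    -- e3 : (-m - n) * A n 0 (-m) = (-m - 2n) * A 0 0 j
    -- e4 : (-n - m) * A m 0 (-n) = (-n - 2m) * A 0 0 j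
    have key : (2 * (m : ℂ) * n * ((n : ℂ) - m)) * A 0 0 j = 0 := by
      linear_combination (-(n : ℂ) * (-(m : ℂ) - n)) * e1 + ((m : ℂ) * (-(m : ℂ) - n)) * e2
        + (2 * (m : ℂ) * n) * e3 - (2 * (m : ℂ) * n) * e4
    have hne : (2 * (m : ℂ) * n * ((n : ℂ) - m)) ≠ 0 := by
      apply mul_ne_zero
      apply mul_ne_zero
      apply mul_ne_zero two_ne_zero
      · exact_mod_cast hm
      · exact_mod_cast hn
      · exact intcast_ne n m (Ne.symm hmn)
    exact (mul_eq_zero.mp key).resolve_left hne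
  have hA0 : ∀ n k : ℤ, k ≠ n → A 0 n k = 0 := by
    intro n k hk
    have e := h1 n 0 k
    rw [ht (k - n) (by omega)] at e
    rw [hsym 0 n k]
    have h2 : ((k : ℂ) - n) * A n 0 k = 0 := by linear_combination e
    exact (mul_eq_zero.mp h2).resolve_left (intcast_ne k n hk)
  have hoff : ∀ m n k : ℤ, k ≠ m + n → ¬(k = m ∧ k = n) → A m n k = 0 := by
    intro m n k hk hd
    by_cases hkm : k = m
    · have hkn : k ≠ n := fun h => hd ⟨hkm, h⟩
      rw [hsym m n k]
      have e := h1 n m k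
      rw [hA0 m (k - n) (by omega)] at e
      have h2 : ((k : ℂ) - n) * A n m k = 0 := by linear_combination e
      exact (mul_eq_zero.mp h2).resolve_left (intcast_ne k n hkn)
    · have e := h1 m n k
      rw [hA0 n (k - m) (by omega)] at e
      have h2 : ((k : ℂ) - m) * A m n k = 0 := by linear_combination e
      exact (mul_eq_zero.mp h2).resolve_left (intcast_ne k m hkm)
  have hrel : ∀ m n : ℤ, m ≠ n → ((n : ℂ) - m) * ((m : ℂ) * A 0 n n + (n : ℂ) * A 0 m m) = 0 := by
    intro m n hmn
    have e1 := h1 m n (m + n)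
    rw [show (m + n - m : ℤ) = n by omega] at e1
    have e2 := h1 n m (m + n)
    rw [hsym n m (m + n), show (m + n - n : ℤ) = m by omega] at e2
    push_cast at e1 e2
    linear_combination (-(m : ℂ)) * e1 + (n : ℂ) * e2
  have halphaflip : ∀ m n : ℤ, m ≠ n → (m : ℂ) * A 0 n n = -(n : ℂ) * A 0 m m := by
    intro m n hmn
    have h := hrel m n hmn
    rcases mul_eq_zero.mp h with h' | h'
    · exact absurd h' (intcast_ne n m (Ne.symm hmn))
    · linear_combination h'
  have hα1 : A 0 1 1 = 0 := by
    have r1 := halphaflip 1 (-1) (by omega)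
    have r2 := halphaflip 2 (-1) (by omega)
    have r3 := halphaflip 1 2 (by omega)
    push_cast at r1 r2 r3
    have : (4 : ℂ) * A 0 1 1 = 0 := by linear_combination -2 * r1 + r2 + r3
    have h4 : (4 : ℂ) ≠ 0 := by norm_num
    exact (mul_eq_zero.mp this).resolve_left h4
  have halpha : ∀ n : ℤ, n ≠ 0 → A 0 n n = 0 := by
    intro n hn
    by_cases h : n = 1
    · subst h; exact hα1
    · have r := halphaflip 1 n (Ne.symm h)
      rw [hα1] at r
      push_cast at r
      simpa using r
  have hsum0 : ∀ m n : ℤ, ¬(m = 0 ∧ n = 0) → A m n (m + n) = 0 := by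
    intro m n hmn
    by_cases hn : n = 0
    · subst hn
      have hm : m ≠ 0 := fun h => hmn ⟨h, rfl⟩
      rw [show (m + 0 : ℤ) = m by omega, hsym m 0 m]
      exact halpha m hm
    · have e := h1 m n (m + n)
      rw [show (m + n - m : ℤ) = n by omega, halpha n hn] at e
      have h2 : ((m : ℂ) + n - m) * A m n (m + n) = 0 := by push_cast at e ⊢; linear_combination e
      have : ((m : ℂ) + n - m) ≠ 0 := by
        have : ((n : ℂ)) ≠ 0 := by exact_mod_cast hn
        intro hcon; apply this; linear_combination hcon
      exact (mul_eq_zero.mp h2).resolve_left this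
  have ht0 : A 0 0 0 = 0 := by
    have e := hS1 1 (-1) 0 0
    rw [show (1 + -1 : ℤ) = 0 by omega] at e
    have e1 : A (-1) 0 (0 - 1) = 0 := by
      rw [show (0 - 1 : ℤ) = -1 + 0 by omega]
      exact hsum0 (-1) 0 (by omega)
    have e2 : A 1 0 (0 - -1) = 0 := by
      rw [show (0 - -1 : ℤ) = 1 + 0 by omega]
      exact hsum0 1 0 (by omega)
    rw [e1, e2] at e
    push_cast at e
    have h2 : (2 : ℂ) * A 0 0 0 = 0 := by linear_combination e
    exact (mul_eq_zero.mp h2).resolve_left two_ne_zero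
  have hdiag : ∀ n : ℤ, A n n n = 0 := by
    intro n
    by_cases hn : n = 0
    · subst hn; exact ht0
    · obtain ⟨p, m, hp, hm, hpm, hs⟩ : ∃ p m : ℤ, p ≠ 0 ∧ m ≠ 0 ∧ p ≠ m ∧ p + m = n := by
        by_cases h : n = 1 ∨ n = 2
        · exact ⟨n + 1, -1, by omega, by omega, by omega, by omega⟩
        · exact ⟨n - 1, 1, by omega, by omega, by omega, by omega⟩
      have e := hS1 p m n n
      rw [hs] at e
      rw [hoff m n (n - p) (by omega) (by omega)] at e
      rw [hoff p n (n - m) (by omega) (by omega)] at e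
      push_cast at e
      have h2 : ((p : ℂ) - m) * A n n n = 0 := by linear_combination e
      exact (mul_eq_zero.mp h2).resolve_left (intcast_ne p m hpm)
  intro m n k
  by_cases hk : k = m + n
  · subst hk
    by_cases h0 : m = 0 ∧ n = 0
    · obtain ⟨h1', h2'⟩ := h0; subst h1'; subst h2'; exact ht0
    · exact hsum0 m n h0
  · by_cases hd : k = m ∧ k = n
    · obtain ⟨h1', h2'⟩ := hd; subst h1'; subst h2'; exact hdiag k
    · exact hoff m n k hk hd

/-- Solver for the `I`-coefficients of `f(L,L)`. -/
lemma wSolvea (a : ℤ → ℤ → ℤ → ℂ)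
    (hsym : ∀ m n k : ℤ, a m n k = a n m k)
    (hS2 : ∀ p m n k : ℤ, ((p - m : ℤ) : ℂ) * a (p + m) n k
      = -(k : ℂ) * a m n (k - p) + (k : ℂ) * a p n (k - m)) :
    ∃ μ : ℤ → ℂ, (∀ j : ℤ, μ j ≠ 0 → j = 0 ∨ a 0 0 j ≠ 0) ∧
      ∀ m n k : ℤ, a m n k = (k : ℂ) * μ (k - m - n) := by
  have h1 : ∀ m n k : ℤ, ((k : ℂ) - m) * a m n k = (k : ℂ) * a 0 n (k - m) := by
    intro m n k
    have h := hS2 0 m n k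
    simp only [zero_add, sub_zero] at h
    push_cast at h
    linear_combination h
  have hν0 : ∀ n : ℤ, a 0 n 0 = 0 := by
    intro n
    have h := h1 1 n 1
    rw [show (1 - 1 : ℤ) = 0 by omega] at h
    have : (1 : ℂ) * a 0 n 0 = 0 := by linear_combination -h
    simpa using this
  set μ : ℤ → ℂ := fun j => if j = 0 then a 0 1 1 else a 0 0 j / (j : ℂ) with hμ
  have hνall : ∀ n k : ℤ, a 0 n k = (k : ℂ) * μ (k - n) := by
    have hdtr : ∀ m n : ℤ, m + n ≠ 0 → (m : ℂ) * a 0 n n = (n : ℂ) * a 0 m m := by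
      intro m n hmn
      have e1 := h1 m n (m + n)
      rw [show (m + n - m : ℤ) = n by omega] at e1
      have e2 := h1 n m (m + n)
      rw [hsym n m (m + n), show (m + n - n : ℤ) = m by omega] at e2
      push_cast at e1 e2
      have key : ((m : ℂ) + n) * ((m : ℂ) * a 0 n n - (n : ℂ) * a 0 m m) = 0 := by
        linear_combination (-(m : ℂ)) * e1 + (n : ℂ) * e2
      rcases mul_eq_zero.mp key with h' | h'
      · exfalso
        have : ((m + n : ℤ) : ℂ) ≠ 0 := by exact_mod_cast hmn
        apply this; push_cast; linear_combination h'
      · linear_combination h'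
    have hdiag : ∀ n : ℤ, a 0 n n = (n : ℂ) * a 0 1 1 := by
      intro n
      by_cases hn0 : n = 0
      · subst hn0; rw [hν0 0]; ring
      · by_cases hn1 : n = -1
        · subst hn1
          have h2 : a 0 2 2 = (2 : ℂ) * a 0 1 1 := by
            have := hdtr 1 2 (by omega); push_cast at this; linear_combination this
          have h3 := hdtr 2 (-1) (by omega)
          push_cast at h3
          have : (2 : ℂ) * a 0 (-1) (-1) = -a 0 2 2 := by linear_combination h3
          rw [h2] at this
          push_cast
          linear_combination this / 2
        · have := hdtr 1 n (by omega)
          push_cast at this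
          linear_combination this
    intro n k
    by_cases hk : k - n = 0
    · have hkn : k = n := by omega
      subst hkn
      rw [show (k - k : ℤ) = 0 by omega, hμ]
      simp only [if_pos rfl]
      exact hdiag k
    · have e := h1 n 0 k
      rw [hsym n 0 k] at e
      rw [hμ]; simp only [if_neg hk]
      have hne : ((k : ℂ) - n) ≠ 0 := intcast_ne k n (by omega)
      push_cast
      field_simp
      push_cast at e
      linear_combination e
  have hpart : ∀ m n k : ℤ, (k ≠ m ∨ k ≠ n) → a m n k = (k : ℂ) * μ (k - m - n) := by
    intro m n k hor
    rcases hor with hkm | hkn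
    · have e := h1 m n k
      rw [hνall n (k - m), show (k - m - n : ℤ) = k - m - n from rfl] at e
      have hne : ((k : ℂ) - m) ≠ 0 := intcast_ne k m hkm
      have : ((k : ℂ) - m) * a m n k = ((k : ℂ) - m) * ((k : ℂ) * μ (k - m - n)) := by
        push_cast at e ⊢; linear_combination e
      exact mul_left_cancel₀ hne this
    · have e := h1 n m k
      rw [hsym n m k, hνall m (k - n), show (k - n - m : ℤ) = k - m - n by omega] at e
      have hne : ((k : ℂ) - n) ≠ 0 := intcast_ne k n hkn
      have : ((k : ℂ) - n) * a m n k = ((k : ℂ) - n) * ((k : ℂ) * μ (k - m - n)) := by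
        push_cast at e ⊢; linear_combination e
      exact mul_left_cancel₀ hne this
  refine ⟨μ, ?_, ?_⟩
  · intro j hj
    by_cases h : j = 0
    · exact Or.inl h
    · right
      intro hz
      apply hj
      rw [hμ]; simp only [if_neg h, hz, zero_div]
  · intro m n k
    by_cases hd : k = m ∧ k = n
    · obtain ⟨h1', h2'⟩ := hd
      subst h1'; subst h2'
      -- diagonal case : a k k k = k * μ (-k)
      obtain ⟨p, q, hp, hq, hpq, hs⟩ : ∃ p q : ℤ, p ≠ 0 ∧ q ≠ 0 ∧ p ≠ q ∧ p + q = k := by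
        by_cases h : k = 1 ∨ k = 2
        · exact ⟨k + 1, -1, by omega, by omega, by omega, by omega⟩
        · exact ⟨k - 1, 1, by omega, by omega, by omega, by omega⟩
      have e := hS2 p q k k
      rw [hs] at e
      rw [hpart q k (k - p) (Or.inr (by omega))] at e
      rw [hpart p k (k - q) (Or.inr (by omega))] at e
      rw [show (k - p - q - k : ℤ) = k - k - k by omega] at e
      rw [show (k - q - p - k : ℤ) = k - k - k by omega] at e
      push_cast at e
      have key : ((p : ℂ) - q) * a k k k = ((p : ℂ) - q) * ((k : ℂ) * μ (k - k - k)) := by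
        linear_combination e
      exact mul_left_cancel₀ (intcast_ne p q hpq) key
    · rw [not_and_or] at hd
      exact hpart m n k hd

/-- Every symmetric biderivation of `W(0,1)` is of the form `Υ^0_Ω` for a
finitely supported family `Ω`. -/
theorem symmetric_biderivation_W01 {W : Type*} [LieRing W] [LieAlgebra ℂ W]
    (L I : ℤ → W) (hW : IsWab 0 1 W L I) (f : W →ₗ[ℂ] W →ₗ[ℂ] W)
    (hf : IsBiderivation (fun x y => f x y)) (hsymm : ∀ x y : W, f x y = f y x) :
    ∃ Ω : ℤ →₀ ℂ,
      (∀ m n : ℤ, f (L m) (L n) =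
        Ω.sum fun k c => (((m + n + k : ℤ) : ℂ) * c) • I (m + n + k)) ∧
      (∀ m n : ℤ, f (L m) (I n) = 0) ∧
      (∀ m n : ℤ, f (I n) (L m) = 0) ∧
      (∀ m n : ℤ, f (I m) (I n) = 0) := by
  obtain ⟨B, hBL, hBI⟩ := hW.basis
  have hrL : ∀ q : ℤ, B.repr (L q) = Finsupp.single (Sum.inl q) 1 := fun q => by
    rw [← hBL q]; exact B.repr_self _
  have hrI : ∀ q : ℤ, B.repr (I q) = Finsupp.single (Sum.inr q) 1 := fun q => by
    rw [← hBI q]; exact B.repr_self _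
  -- coordinates of brackets with basis elements
  have key2 : ∀ (p k : ℤ) (x : W), B.repr ⁅L p, x⁆ (Sum.inl k)
      = ((2 * p - k : ℤ) : ℂ) * B.repr x (Sum.inl (k - p)) := by
    intro p k x
    let φ : W →ₗ[ℂ] ℂ :=
      { toFun := fun y => B.repr ⁅L p, y⁆ (Sum.inl k)
          - ((2 * p - k : ℤ) : ℂ) * B.repr y (Sum.inl (k - p))
        map_add' := fun y z => by
          simp only [lie_add, map_add, Finsupp.add_apply]; ring
        map_smul' := fun c y => by
          simp only [lie_smul, map_smul, Finsupp.smul_apply, RingHom.id_apply,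
            smul_eq_mul]; ring }
    have hφ : φ = 0 := by
      refine B.ext fun i => ?_
      cases i with
      | inl q =>
        simp only [φ, LinearMap.coe_mk, AddHom.coe_mk, hBL, hW.bracket_LL, map_smul,
          hrL, Finsupp.smul_apply, Finsupp.single_apply, smul_eq_mul,
          LinearMap.zero_apply, Sum.inl.injEq]
        split_ifs with h1 h2 h2
        · rw [show (p - q : ℤ) = 2 * p - k by omega]; ring
        · omega
        · omega
        · ring
      | inr q =>
        simp only [φ, LinearMap.coe_mk, AddHom.coe_mk, hBI, hW.bracket_LI, map_smul,
          hrI, Finsupp.smul_apply, Finsupp.single_apply, smul_eq_mul,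
          LinearMap.zero_apply, reduceCtorEq, if_false, mul_zero, sub_zero]
    have h0 := LinearMap.congr_fun hφ x
    simp only [φ, LinearMap.coe_mk, AddHom.coe_mk, LinearMap.zero_apply] at h0
    exact sub_eq_zero.mp h0
  have key1 : ∀ (p k : ℤ) (x : W), B.repr ⁅L p, x⁆ (Sum.inr k)
      = -(k : ℂ) * B.repr x (Sum.inr (k - p)) := by
    intro p k x
    let φ : W →ₗ[ℂ] ℂ :=
      { toFun := fun y => B.repr ⁅L p, y⁆ (Sum.inr k)
          - (-(k : ℂ)) * B.repr y (Sum.inr (k - p))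
        map_add' := fun y z => by
          simp only [lie_add, map_add, Finsupp.add_apply]; ring
        map_smul' := fun c y => by
          simp only [lie_smul, map_smul, Finsupp.smul_apply, RingHom.id_apply,
            smul_eq_mul]; ring }
    have hφ : φ = 0 := by
      refine B.ext fun i => ?_
      cases i with
      | inl q =>
        simp only [φ, LinearMap.coe_mk, AddHom.coe_mk, hBL, hW.bracket_LL, map_smul,
          hrL, Finsupp.smul_apply, Finsupp.single_apply, smul_eq_mul,
          LinearMap.zero_apply, reduceCtorEq, if_false, mul_zero, sub_zero]
      | inr q =>
        simp only [φ, LinearMap.coe_mk, AddHom.coe_mk, hBI, hW.bracket_LI, map_smul,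
          hrI, Finsupp.smul_apply, Finsupp.single_apply, smul_eq_mul,
          LinearMap.zero_apply, Sum.inr.injEq]
        split_ifs with h1 h2 h2
        · have h1' : ((p + q : ℤ) : ℂ) = (k : ℂ) := by exact_mod_cast h1
          push_cast at h1'
          linear_combination -h1'
        · omega
        · omega
        · ring
    have h0 := LinearMap.congr_fun hφ x
    simp only [φ, LinearMap.coe_mk, AddHom.coe_mk, LinearMap.zero_apply] at h0
    exact sub_eq_zero.mp h0
  have hIL : ∀ p q : ℤ, ⁅I p, L q⁆ = ((p + q : ℤ) : ℂ) • I (q + p) := by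
    intro p q
    rw [← lie_skew, hW.bracket_LI, ← neg_smul]
    congr 1
    push_cast
    ring
  have key3 : ∀ (p k : ℤ) (x : W), B.repr ⁅I p, x⁆ (Sum.inr k)
      = (k : ℂ) * B.repr x (Sum.inl (k - p)) := by
    intro p k x
    let φ : W →ₗ[ℂ] ℂ :=
      { toFun := fun y => B.repr ⁅I p, y⁆ (Sum.inr k)
          - (k : ℂ) * B.repr y (Sum.inl (k - p))
        map_add' := fun y z => by
          simp only [lie_add, map_add, Finsupp.add_apply]; ring
        map_smul' := fun c y => by
          simp only [lie_smul, map_smul, Finsupp.smul_apply, RingHom.id_apply,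
            smul_eq_mul]; ring }
    have hφ : φ = 0 := by
      refine B.ext fun i => ?_
      cases i with
      | inl q =>
        simp only [φ, LinearMap.coe_mk, AddHom.coe_mk, hBL, hIL, map_smul,
          hrL, hrI, Finsupp.smul_apply, Finsupp.single_apply, smul_eq_mul,
          LinearMap.zero_apply, Sum.inr.injEq, Sum.inl.injEq]
        split_ifs with h1 h2 h2
        · have h1' : ((p + q : ℤ) : ℂ) = (k : ℂ) := by exact_mod_cast (by omega : p + q = k)
          push_cast at h1' ⊢
          linear_combination h1'
        · omega
        · omega
        · ring
      | inr q =>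
        simp only [φ, LinearMap.coe_mk, AddHom.coe_mk, hBI, hW.bracket_II, map_zero,
          hrI, Finsupp.zero_apply, Finsupp.single_apply, reduceCtorEq, if_false,
          mul_zero, sub_zero, LinearMap.zero_apply, zero_sub, neg_eq_zero]
    have h0 := LinearMap.congr_fun hφ x
    simp only [φ, LinearMap.coe_mk, AddHom.coe_mk, LinearMap.zero_apply] at h0
    exact sub_eq_zero.mp h0
  have key4 : ∀ (p k : ℤ) (x : W), B.repr ⁅I p, x⁆ (Sum.inl k) = 0 := by
    intro p k x
    let φ : W →ₗ[ℂ] ℂ :=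
      { toFun := fun y => B.repr ⁅I p, y⁆ (Sum.inl k)
        map_add' := fun y z => by
          simp only [lie_add, map_add, Finsupp.add_apply]
        map_smul' := fun c y => by
          simp only [lie_smul, map_smul, Finsupp.smul_apply, RingHom.id_apply,
            smul_eq_mul] }
    have hφ : φ = 0 := by
      refine B.ext fun i => ?_
      cases i with
      | inl q =>
        simp only [φ, LinearMap.coe_mk, AddHom.coe_mk, hBL, hIL, map_smul,
          hrI, Finsupp.smul_apply, Finsupp.single_apply, smul_eq_mul,
          LinearMap.zero_apply, reduceCtorEq, if_false, mul_zero]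
      | inr q =>
        simp only [φ, LinearMap.coe_mk, AddHom.coe_mk, hBI, hW.bracket_II, map_zero,
          Finsupp.zero_apply, LinearMap.zero_apply]
    have h0 := LinearMap.congr_fun hφ x
    simpa only [φ, LinearMap.coe_mk, AddHom.coe_mk, LinearMap.zero_apply] using h0

  -- the biderivation identities, in coordinates
  have eqLL : ∀ p m n : ℤ, ((p - m : ℤ) : ℂ) • f (L (p + m)) (L n)
      = ⁅L p, f (L m) (L n)⁆ - ⁅L m, f (L p) (L n)⁆ := by
    intro p m n
    have h := hf.1 (L p) (L m) (L n)
    simp only at h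
    rw [hW.bracket_LL, map_smul, LinearMap.smul_apply,
      show ⁅f (L p) (L n), L m⁆ = -⁅L m, f (L p) (L n)⁆ from (lie_skew _ _).symm,
      ← sub_eq_add_neg] at h
    exact h
  have hS1' : ∀ p m n k : ℤ, ((p - m : ℤ) : ℂ) * B.repr (f (L (p + m)) (L n)) (Sum.inl k)
      = ((2 * p - k : ℤ) : ℂ) * B.repr (f (L m) (L n)) (Sum.inl (k - p))
        - ((2 * m - k : ℤ) : ℂ) * B.repr (f (L p) (L n)) (Sum.inl (k - m)) := by
    intro p m n k
    have hk := congrArg (fun z => B.repr z (Sum.inl k)) (eqLL p m n)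
    simp only [map_smul, map_sub, Finsupp.smul_apply, Finsupp.sub_apply, smul_eq_mul,
      key2] at hk
    push_cast at hk ⊢
    linear_combination hk
  have hS2' : ∀ p m n k : ℤ, ((p - m : ℤ) : ℂ) * B.repr (f (L (p + m)) (L n)) (Sum.inr k)
      = -(k : ℂ) * B.repr (f (L m) (L n)) (Sum.inr (k - p))
        + (k : ℂ) * B.repr (f (L p) (L n)) (Sum.inr (k - m)) := by
    intro p m n k
    have hk := congrArg (fun z => B.repr z (Sum.inr k)) (eqLL p m n)
    simp only [map_smul, map_sub, Finsupp.smul_apply, Finsupp.sub_apply, smul_eq_mul,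
      key1] at hk
    push_cast at hk ⊢
    linear_combination hk
  have hA : ∀ m n k : ℤ, B.repr (f (L m) (L n)) (Sum.inl k) = 0 :=
    wSolveA (fun m n k => B.repr (f (L m) (L n)) (Sum.inl k))
      (fun m n k => by simp only [hsymm (L m) (L n)])
      (fun p m n k => hS1' p m n k)
  have eqLI : ∀ p m n : ℤ, (-((p + m : ℤ) : ℂ)) • f (L n) (I (p + m))
      = ⁅L p, f (L n) (I m)⁆ - ⁅I m, f (L p) (L n)⁆ := by
    intro p m n
    have h := hf.1 (L p) (I m) (L n)
    simp only at h
    rw [hW.bracket_LI, map_smul, LinearMap.smul_apply, hsymm (I (p + m)) (L n),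
      hsymm (I m) (L n),
      show ⁅f (L p) (L n), I m⁆ = -⁅I m, f (L p) (L n)⁆ from (lie_skew _ _).symm,
      ← sub_eq_add_neg] at h
    rw [show (-((p + m : ℤ) : ℂ)) = -((m : ℂ) + 0 + 1 * (p : ℂ)) by push_cast; ring]
    exact h
  have hS3' : ∀ p m n k : ℤ, (-((p + m : ℤ) : ℂ)) * B.repr (f (L n) (I (p + m))) (Sum.inl k)
      = ((2 * p - k : ℤ) : ℂ) * B.repr (f (L n) (I m)) (Sum.inl (k - p)) := by
    intro p m n k
    have hk := congrArg (fun z => B.repr z (Sum.inl k)) (eqLI p m n)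
    simp only [map_smul, map_sub, Finsupp.smul_apply, Finsupp.sub_apply, smul_eq_mul,
      key2, key4, sub_zero] at hk
    exact hk
  have hBb : ∀ n m k : ℤ, B.repr (f (L n) (I m)) (Sum.inl k) = 0 :=
    wSolveB (fun n m k => B.repr (f (L n) (I m)) (Sum.inl k))
      (fun p m n k => hS3' p m n k)
  have hS4' : ∀ p m n k : ℤ, (-((p + m : ℤ) : ℂ)) * B.repr (f (L n) (I (p + m))) (Sum.inr k)
      = -(k : ℂ) * B.repr (f (L n) (I m)) (Sum.inr (k - p)) := by
    intro p m n k
    have hk := congrArg (fun z => B.repr z (Sum.inr k)) (eqLI p m n)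
    simp only [map_smul, map_sub, Finsupp.smul_apply, Finsupp.sub_apply, smul_eq_mul,
      key1, key3] at hk
    rw [hA p n (k - m)] at hk
    simpa using hk
  have eqLLI : ∀ p n m : ℤ, ((p - n : ℤ) : ℂ) • f (L (p + n)) (I m)
      = ⁅L p, f (L n) (I m)⁆ - ⁅L n, f (L p) (I m)⁆ := by
    intro p n m
    have h := hf.1 (L p) (L n) (I m)
    simp only at h
    rw [hW.bracket_LL, map_smul, LinearMap.smul_apply,
      show ⁅f (L p) (I m), L n⁆ = -⁅L n, f (L p) (I m)⁆ from (lie_skew _ _).symm,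
      ← sub_eq_add_neg] at h
    exact h
  have hS5' : ∀ p n m k : ℤ, ((p - n : ℤ) : ℂ) * B.repr (f (L (p + n)) (I m)) (Sum.inr k)
      = -(k : ℂ) * B.repr (f (L n) (I m)) (Sum.inr (k - p))
        + (k : ℂ) * B.repr (f (L p) (I m)) (Sum.inr (k - n)) := by
    intro p n m k
    have hk := congrArg (fun z => B.repr z (Sum.inr k)) (eqLLI p n m)
    simp only [map_smul, map_sub, Finsupp.smul_apply, Finsupp.sub_apply, smul_eq_mul,
      key1] at hk
    push_cast at hk ⊢
    linear_combination hk
  have hbb : ∀ n m k : ℤ, B.repr (f (L n) (I m)) (Sum.inr k) = 0 :=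
    wSolvebb (fun n m k => B.repr (f (L n) (I m)) (Sum.inr k))
      (fun p m n k => hS4' p m n k)
      (fun p n m k => hS5' p n m k)
  have eqLII : ∀ p n m : ℤ, (-((p + n : ℤ) : ℂ)) • f (I (p + n)) (I m)
      = ⁅L p, f (I n) (I m)⁆ - ⁅I n, f (L p) (I m)⁆ := by
    intro p n m
    have h := hf.1 (L p) (I n) (I m)
    simp only at h
    rw [hW.bracket_LI, map_smul, LinearMap.smul_apply,
      show ⁅f (L p) (I m), I n⁆ = -⁅I n, f (L p) (I m)⁆ from (lie_skew _ _).symm,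
      ← sub_eq_add_neg] at h
    rw [show (-((p + n : ℤ) : ℂ)) = -((n : ℂ) + 0 + 1 * (p : ℂ)) by push_cast; ring]
    exact h
  have hS6' : ∀ p n m k : ℤ, (-((p + n : ℤ) : ℂ)) * B.repr (f (I (p + n)) (I m)) (Sum.inl k)
      = ((2 * p - k : ℤ) : ℂ) * B.repr (f (I n) (I m)) (Sum.inl (k - p)) := by
    intro p n m k
    have hk := congrArg (fun z => B.repr z (Sum.inl k)) (eqLII p n m)
    simp only [map_smul, map_sub, Finsupp.smul_apply, Finsupp.sub_apply, smul_eq_mul,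
      key2, key4, sub_zero] at hk
    exact hk
  have hCc : ∀ m n k : ℤ, B.repr (f (I m) (I n)) (Sum.inl k) = 0 := by
    have h := wSolveB (fun n q k => B.repr (f (I q) (I n)) (Sum.inl k))
      (fun p m n k => hS6' p m n k)
    exact fun m n k => h n m k
  have hS7' : ∀ p n m k : ℤ, (-((p + n : ℤ) : ℂ)) * B.repr (f (I (p + n)) (I m)) (Sum.inr k)
      = -(k : ℂ) * B.repr (f (I n) (I m)) (Sum.inr (k - p)) := by
    intro p n m k
    have hk := congrArg (fun z => B.repr z (Sum.inr k)) (eqLII p n m)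
    simp only [map_smul, map_sub, Finsupp.smul_apply, Finsupp.sub_apply, smul_eq_mul,
      key1, key3] at hk
    rw [hBb p m (k - n)] at hk
    simpa using hk
  have hcc : ∀ m n k : ℤ, B.repr (f (I m) (I n)) (Sum.inr k) = 0 :=
    wSolvecc (fun m n k => B.repr (f (I m) (I n)) (Sum.inr k))
      (fun m n k => by simp only [hsymm (I m) (I n)])
      (fun p n m k => hS7' p n m k)
  obtain ⟨μ, hμsupp, hμ⟩ := wSolvea (fun m n k => B.repr (f (L m) (L n)) (Sum.inr k))
      (fun m n k => by simp only [hsymm (L m) (L n)])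
      (fun p m n k => hS2' p m n k)

  have hLI0 : ∀ m n : ℤ, f (L m) (I n) = 0 := by
    intro m n
    have hz : B.repr (f (L m) (I n)) = 0 := by
      ext i
      cases i with
      | inl j => simpa using hBb m n j
      | inr j => simpa using hbb m n j
    exact (LinearEquiv.map_eq_zero_iff B.repr).mp hz
  have hII0 : ∀ m n : ℤ, f (I m) (I n) = 0 := by
    intro m n
    have hz : B.repr (f (I m) (I n)) = 0 := by
      ext i
      cases i with
      | inl j => simpa using hCc m n j
      | inr j => simpa using hcc m n j
    exact (LinearEquiv.map_eq_zero_iff B.repr).mp hz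
  have hμsupp' : ∀ j : ℤ, μ j ≠ 0 → j = 0 ∨ B.repr (f (L 0) (L 0)) (Sum.inr j) ≠ 0 := by
    intro j hj
    simpa using hμsupp j hj
  have hμ' : ∀ m n k : ℤ, B.repr (f (L m) (L n)) (Sum.inr k) = (k : ℂ) * μ (k - m - n) := by
    intro m n k
    simpa using hμ m n k
  set S : Finset ℤ :=
    insert 0 ((B.repr (f (L 0) (L 0))).support.image (Sum.elim id id)) with hS
  have hΩs : ∀ j : ℤ, μ j ≠ 0 → j ∈ S := by
    intro j hj
    rcases hμsupp' j hj with h | h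
    · exact h ▸ Finset.mem_insert_self 0 _
    · refine Finset.mem_insert_of_mem ?_
      exact Finset.mem_image.mpr ⟨Sum.inr j, Finsupp.mem_support_iff.mpr h, rfl⟩
  refine ⟨Finsupp.onFinset S μ hΩs, ?_, hLI0, fun m n => by rw [hsymm]; exact hLI0 m n, hII0⟩
  intro m n
  apply B.repr.injective
  rw [map_finsuppSum]
  ext i
  rw [Finsupp.sum_apply]
  cases i with
  | inl j =>
    rw [hA m n j]
    symm
    apply Finset.sum_eq_zero
    intro k hk
    simp [hrI, Finsupp.single_apply]
  | inr j =>
    rw [hμ' m n j]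
    have hterm : ∀ k c, B.repr ((((m + n + k : ℤ) : ℂ) * c) • I (m + n + k)) (Sum.inr j)
        = if k = j - m - n then (j : ℂ) * c else 0 := by
      intro k c
      simp only [map_smul, hrI, Finsupp.smul_apply, Finsupp.single_apply, smul_eq_mul]
      by_cases hc : k = j - m - n
      · rw [if_pos (by simpa using (by omega : m + n + k = j)), if_pos hc, mul_one]
        have : ((m + n + k : ℤ) : ℂ) = (j : ℂ) := by exact_mod_cast (by omega : m + n + k = j)
        rw [this]
      · rw [if_neg (by simp; omega), if_neg hc, mul_zero]
    rw [Finsupp.sum_congr (g2 := fun k c => if k = j - m - n then (j : ℂ) * c else 0)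
      (fun k _ => hterm k _), Finsupp.sum_ite_eq']
    by_cases hmem : (j - m - n) ∈ (Finsupp.onFinset S μ hΩs).support
    · rw [if_pos hmem, Finsupp.onFinset_apply]
    · rw [if_neg hmem]
      have h0 : μ (j - m - n) = 0 := by
        have := Finsupp.notMem_support_iff.mp hmem
        rwa [Finsupp.onFinset_apply] at this
      rw [h0, mul_zero]
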